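/- arXiv:2310.02951 — 4 statements merged into one kernel-verified Lean document; each statement's English description precedes it below -/
import Mathlib

section
/- Let H be a Hilbert space, x ∈ H, and for each nonempty closed convex set K ⊆ H let P_K x denote the metric projection of x onto K. If (K_n) and K are nonempty closed convex subsets of H with Hausdorff distance d_H(K_n, K) → 0, then ‖P_{K_n} x − P_K x‖ → 0. -/
open Filter Topology Metric RealInnerProductSpace

/-!
If `p`, `q` are the projections of `x` onto convex sets `K`, `L`, the variational inequalities
`⟪x - p, y - p⟫ ≤ 0` (`y ∈ K`) and `⟪x - q, z - q⟫ ≤ 0` (`z ∈ L`) give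
`‖p - q‖² ≤ ‖x - p‖ ‖y - q‖ + ‖x - q‖ ‖p - z‖`. For `K = Kₙ`, `L = Klim`, Hausdorff convergence
supplies `yₙ ∈ Kₙ` close to `q` and `zₙ ∈ Klim` close to `pₙ`, so the right-hand side tends to `0`.
-/

theorem exists_mem_tendsto_dist_of_tendsto_hausdorffEDist {α : Type*} [PseudoMetricSpace α]
    {S T : ℕ → Set α} {a : ℕ → α}
    (h : Tendsto (fun n => hausdorffEDist (S n) (T n)) atTop (𝓝 0))
    (ha : ∀ n, a n ∈ S n) (hT : ∀ n, (T n).Nonempty) :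
    ∃ b : ℕ → α, (∀ n, b n ∈ T n) ∧ Tendsto (fun n => dist (a n) (b n)) atTop (𝓝 0) := by
  have hnear (n : ℕ) : ∃ b ∈ T n, dist (a n) b < infDist (a n) (T n) + 1 / (n + 1) :=
    (infDist_lt_iff (hT n)).1 (lt_add_of_pos_right _ Nat.one_div_pos_of_nat)
  choose b hbT hb using hnear
  refine ⟨b, hbT, ?_⟩
  have hdist : Tendsto (fun n => hausdorffDist (S n) (T n)) atTop (𝓝 0) :=
    (ENNReal.tendsto_toReal ENNReal.zero_ne_top).comp h
  have hbound : Tendsto (fun n : ℕ => hausdorffDist (S n) (T n) + 1 / (n + 1)) atTop (𝓝 0) := by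
    simpa using hdist.add tendsto_one_div_add_atTop_nhds_zero_nat
  refine tendsto_of_tendsto_of_tendsto_of_le_of_le' tendsto_const_nhds hbound
    (Eventually.of_forall fun n => dist_nonneg) ?_
  filter_upwards [h.eventually_ne ENNReal.zero_ne_top] with n hfin
  exact (hb n).le.trans (by gcongr; exact infDist_le_hausdorffDist_of_mem (ha n) hfin)

section Projection

variable {H : Type*} [NormedAddCommGroup H] [InnerProductSpace ℝ H]

theorem inner_sub_sub_nonpos_of_forall_norm_sub_le {K : Set H} (hK : Convex ℝ K) {x p : H}
    (hp : p ∈ K) (hmin : ∀ y ∈ K, ‖x - p‖ ≤ ‖x - y‖) {y : H} (hy : y ∈ K) :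
    ⟪x - p, y - p⟫ ≤ 0 := by
  have : Nonempty K := ⟨⟨p, hp⟩⟩
  refine (norm_eq_iInf_iff_real_inner_le_zero hK hp).1 ?_ y hy
  exact le_antisymm (le_ciInf fun w => hmin w w.2)
    (ciInf_le ⟨0, by rintro _ ⟨w, rfl⟩; exact norm_nonneg (x - w)⟩ (⟨p, hp⟩ : K))

theorem sq_norm_sub_le_of_forall_norm_sub_le {K L : Set H} (hK : Convex ℝ K) (hL : Convex ℝ L)
    {x p q : H} (hp : p ∈ K) (hpmin : ∀ y ∈ K, ‖x - p‖ ≤ ‖x - y‖)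
    (hq : q ∈ L) (hqmin : ∀ z ∈ L, ‖x - q‖ ≤ ‖x - z‖) {y z : H} (hy : y ∈ K) (hz : z ∈ L) :
    ‖p - q‖ ^ 2 ≤ ‖x - p‖ * ‖y - q‖ + ‖x - q‖ * ‖p - z‖ := by
  have hvar_p := inner_sub_sub_nonpos_of_forall_norm_sub_le hK hp hpmin hy
  have hvar_q := inner_sub_sub_nonpos_of_forall_norm_sub_le hL hq hqmin hz
  have hsplit : ‖p - q‖ ^ 2 =
      ⟪x - p, y - p⟫ + ⟪p - x, y - q⟫ + ⟪x - q, p - z⟫ + ⟪x - q, z - q⟫ := by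
    rw [← real_inner_self_eq_norm_sq]
    simp only [inner_sub_left, inner_sub_right, real_inner_comm]
    ring
  have h1 : ⟪p - x, y - q⟫ ≤ ‖x - p‖ * ‖y - q‖ :=
    norm_sub_rev x p ▸ real_inner_le_norm _ _
  have h2 : ⟪x - q, p - z⟫ ≤ ‖x - q‖ * ‖p - z‖ := real_inner_le_norm _ _
  linarith

end Projection

theorem metric_projection_continuous_in_set_general
    {H : Type*} [NormedAddCommGroup H] [InnerProductSpace ℝ H]
    (x : H) (K : ℕ → Set H) (Klim : Set H)
    (hK_convex : ∀ n, Convex ℝ (K n))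
    (hKlim_convex : Convex ℝ Klim)
    (p : ℕ → H) (hp_mem : ∀ n, p n ∈ K n)
    (hp_min : ∀ n, ∀ y ∈ K n, ‖x - p n‖ ≤ ‖x - y‖)
    (q : H) (hq_mem : q ∈ Klim) (hq_min : ∀ y ∈ Klim, ‖x - q‖ ≤ ‖x - y‖)
    (hconv : Tendsto (fun n => EMetric.hausdorffEdist (K n) Klim) atTop (𝓝 0)) :
    Tendsto p atTop (𝓝 q) := by
  have hH : Tendsto (fun n => hausdorffEDist (K n) Klim) atTop (𝓝 0) := hconv
  obtain ⟨y, hyK, hqy⟩ := exists_mem_tendsto_dist_of_tendsto_hausdorffEDist (S := fun _ => Klim)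
    (a := fun _ => q) (by simpa only [hausdorffEDist_comm] using hH) (fun _ => hq_mem)
    fun n => ⟨p n, hp_mem n⟩
  obtain ⟨z, hzK, hpz⟩ :=
    exists_mem_tendsto_dist_of_tendsto_hausdorffEDist hH hp_mem fun _ => ⟨q, hq_mem⟩
  have hbound (n : ℕ) :
      ‖p n - q‖ ^ 2 ≤ ‖x - y n‖ * dist q (y n) + ‖x - q‖ * dist (p n) (z n) :=
    calc ‖p n - q‖ ^ 2 ≤ ‖x - p n‖ * ‖y n - q‖ + ‖x - q‖ * ‖p n - z n‖ :=
          sq_norm_sub_le_of_forall_norm_sub_le (hK_convex n) hKlim_convex (hp_mem n) (hp_min n)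
            hq_mem hq_min (hyK n) (hzK n)
      _ ≤ ‖x - y n‖ * dist q (y n) + ‖x - q‖ * dist (p n) (z n) := by
          rw [dist_eq_norm, dist_eq_norm, norm_sub_rev q]
          gcongr
          exact hp_min n _ (hyK n)
  have hy : Tendsto y atTop (𝓝 q) :=
    tendsto_iff_dist_tendsto_zero.2 (by simpa only [dist_comm] using hqy)
  have hlim : Tendsto (fun n => ‖x - y n‖ * dist q (y n) + ‖x - q‖ * dist (p n) (z n))
      atTop (𝓝 0) := by
    simpa using ((tendsto_const_nhds.sub hy).norm.mul hqy).add (tendsto_const_nhds.mul hpz)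
  have hsq : Tendsto (fun n => ‖p n - q‖ ^ 2) atTop (𝓝 0) :=
    squeeze_zero (fun n => by positivity) hbound hlim
  rw [tendsto_iff_norm_sub_tendsto_zero]
  simpa using hsq.sqrt

/-- continuity of the metric projection onto closed convex sets of a Hilbert
space with respect to Hausdorff convergence of the sets: if `p n` is the metric projection
of `x` onto the nonempty closed convex set `K n`, `p` the metric projection of `x` onto the
nonempty closed convex set `K`, and `d_H(K n, K) → 0`, then `p n → p`. -/
theorem metric_projection_continuous_in_set
    {H : Type*} [NormedAddCommGroup H] [InnerProductSpace ℝ H] [CompleteSpace H]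
    (x : H) (K : ℕ → Set H) (Klim : Set H)
    (hK_ne : ∀ n, (K n).Nonempty) (hK_closed : ∀ n, IsClosed (K n))
    (hK_convex : ∀ n, Convex ℝ (K n))
    (hKlim_ne : Klim.Nonempty) (hKlim_closed : IsClosed Klim) (hKlim_convex : Convex ℝ Klim)
    (p : ℕ → H) (hp_mem : ∀ n, p n ∈ K n)
    (hp_min : ∀ n, ∀ y ∈ K n, ‖x - p n‖ ≤ ‖x - y‖)
    (q : H) (hq_mem : q ∈ Klim) (hq_min : ∀ y ∈ Klim, ‖x - q‖ ≤ ‖x - y‖)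
    (hconv : Tendsto (fun n => EMetric.hausdorffEdist (K n) Klim) atTop (𝓝 0)) :
    Tendsto p atTop (𝓝 q) :=
  metric_projection_continuous_in_set_general x K Klim hK_convex hKlim_convex p hp_mem hp_min q
    hq_mem hq_min hconv
end

section
/- Let H be a Hilbert space, K ⊆ H nonempty closed convex, G, G' : H → H bounded self-adjoint linear operators with λ_min(G) > 0 (i.e., ⟨Gx,x⟩ ≥ λ_min(G)‖x‖² for all x), and g, g' ∈ H. Let x_{G,g} = argmin_{x∈K} (½⟨Gx,x⟩ + ⟨g,x⟩) and x_{G',g'} = argmin_{x∈K} (½⟨G'x,x⟩ + ⟨g',x⟩) (assuming the latter exists). Then ‖x_{G,g} − x_{G',g'}‖ ≤ (1/λ_min(G)) (‖G−G'‖_op ‖x_{G',g'}‖ + ‖g−g'‖). -/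
open scoped RealInnerProductSpace

private lemma quad_var_ineq
    {H : Type*} [NormedAddCommGroup H] [InnerProductSpace ℝ H]
    {K : Set H} (hK_convex : Convex ℝ K)
    (G : H →L[ℝ] H) (hG_sa : ∀ x y : H, ⟪G x, y⟫ = ⟪x, G y⟫)
    (g x : H) (hx : x ∈ K)
    (hmin : ∀ y ∈ K, (1 / 2) * ⟪G x, x⟫ + ⟪g, x⟫ ≤ (1 / 2) * ⟪G y, y⟫ + ⟪g, y⟫)
    (y : H) (hy : y ∈ K) : 0 ≤ ⟪G x + g, y - x⟫ := by
  set d := y - x with hd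
  set a : ℝ := ⟪G x, d⟫ + ⟪g, d⟫ with ha_def
  set b : ℝ := (1/2) * ⟪G d, d⟫ with hb_def
  have key : ∀ t : ℝ, 0 < t → t ≤ 1 → 0 ≤ t * a + t^2 * b := by
    intro t ht ht1
    have hz : x + t • d ∈ K := by
      have h := hK_convex hx hy (by linarith : (0:ℝ) ≤ 1 - t) ht.le (by ring)
      have : (1 - t) • x + t • y = x + t • d := by
        rw [hd, smul_sub]; module
      rwa [this] at h
    have hmin' := hmin _ hz
    have hsym : ⟪G d, x⟫ = ⟪G x, d⟫ := by rw [hG_sa, real_inner_comm]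
    have hexp : (1 / 2) * ⟪G (x + t • d), x + t • d⟫ + ⟪g, x + t • d⟫
        = ((1 / 2) * ⟪G x, x⟫ + ⟪g, x⟫) + (t * a + t^2 * b) := by
      simp only [map_add, map_smul, inner_add_left, inner_add_right,
        real_inner_smul_left, real_inner_smul_right, ha_def, hb_def]
      rw [hsym]; ring
    rw [hexp] at hmin'
    exact (le_add_iff_nonneg_right _).mp hmin'
  have ha : 0 ≤ a := by
    by_contra h
    push_neg at h
    rcases le_or_gt b 0 with hb | hb
    · have := key 1 one_pos le_rfl
      nlinarith
    · set t := min 1 (-a / (2 * b)) with htdef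
      have ht : 0 < t := lt_min one_pos (div_pos (by linarith) (by linarith))
      have hkey := key t ht (min_le_left _ _)
      have hle : t * (2 * b) ≤ -a := by
        have h' : t ≤ -a / (2 * b) := min_le_right _ _
        rwa [le_div_iff₀ (by linarith)] at h'
      nlinarith [mul_pos ht ht, mul_le_mul_of_nonneg_left hle ht.le]
  have : ⟪G x + g, d⟫ = a := by rw [inner_add_left, ha_def]
  rw [this]; exact ha

/-- stability of constrained quadratic minimisation. If `x₁` minimises
`½⟨Gx,x⟩ + ⟨g,x⟩` over the nonempty closed convex set `K` and `x₂` minimises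
`½⟨G'x,x⟩ + ⟨g',x⟩` over `K`, with `G, G'` bounded self-adjoint and
`⟨Gx,x⟩ ≥ λ‖x‖²` with `λ > 0`, then
`‖x₁ − x₂‖ ≤ (1/λ)(‖G−G'‖ ‖x₂‖ + ‖g−g'‖)`. -/
theorem constrained_quadratic_stability
    {H : Type*} [NormedAddCommGroup H] [InnerProductSpace ℝ H] [CompleteSpace H]
    (K : Set H) (hK_ne : K.Nonempty) (hK_closed : IsClosed K) (hK_convex : Convex ℝ K)
    (G G' : H →L[ℝ] H)
    (hG_sa : ∀ x y : H, ⟪G x, y⟫ = ⟪x, G y⟫) (hG'_sa : ∀ x y : H, ⟪G' x, y⟫ = ⟪x, G' y⟫)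
    (lam : ℝ) (hlam : 0 < lam) (hG_coercive : ∀ x : H, lam * ‖x‖ ^ 2 ≤ ⟪G x, x⟫)
    (g g' : H) (x₁ x₂ : H) (hx₁_mem : x₁ ∈ K) (hx₂_mem : x₂ ∈ K)
    (hx₁_min : ∀ y ∈ K, (1 / 2) * ⟪G x₁, x₁⟫ + ⟪g, x₁⟫ ≤ (1 / 2) * ⟪G y, y⟫ + ⟪g, y⟫)
    (hx₂_min : ∀ y ∈ K, (1 / 2) * ⟪G' x₂, x₂⟫ + ⟪g', x₂⟫ ≤ (1 / 2) * ⟪G' y, y⟫ + ⟪g', y⟫) :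
    ‖x₁ - x₂‖ ≤ (1 / lam) * (‖G - G'‖ * ‖x₂‖ + ‖g - g'‖) := by
  have vi1 := quad_var_ineq hK_convex G hG_sa g x₁ hx₁_mem hx₁_min x₂ hx₂_mem
  have vi2 := quad_var_ineq hK_convex G' hG'_sa g' x₂ hx₂_mem hx₂_min x₁ hx₁_mem
  set d := x₁ - x₂ with hd
  -- rewrite vi1, vi2 in terms of inner products with d
  have h1 : ⟪G x₁ + g, x₂ - x₁⟫ = -(⟪G x₁, d⟫ + ⟪g, d⟫) := by
    rw [show x₂ - x₁ = -d by rw [hd]; abel]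
    simp [inner_add_left, inner_neg_right]
  have h2 : ⟪G' x₂ + g', x₁ - x₂⟫ = ⟪G' x₂, d⟫ + ⟪g', d⟫ := by
    rw [← hd, inner_add_left]
  rw [h1] at vi1
  rw [h2] at vi2
  -- combine: ⟪G d, d⟫ ≤ -⟪(G - G') x₂ + (g - g'), d⟫
  have hcomb : ⟪G d, d⟫ ≤ ‖(G - G') x₂ + (g - g')‖ * ‖d‖ := by
    have hsplit : ⟪G d, d⟫ = (⟪G x₁, d⟫ + ⟪g, d⟫) - (⟪G' x₂, d⟫ + ⟪g', d⟫)
        - ⟪(G - G') x₂ + (g - g'), d⟫ := by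
      simp only [hd, map_sub, inner_sub_left, inner_add_left,
        ContinuousLinearMap.sub_apply]
      ring
    have hcs : -⟪(G - G') x₂ + (g - g'), d⟫ ≤ ‖(G - G') x₂ + (g - g')‖ * ‖d‖ := by
      have := abs_real_inner_le_norm ((G - G') x₂ + (g - g')) d
      have := neg_abs_le ⟪(G - G') x₂ + (g - g'), d⟫
      linarith
    linarith
  have hnormbd : ‖(G - G') x₂ + (g - g')‖ ≤ ‖G - G'‖ * ‖x₂‖ + ‖g - g'‖ := by
    calc ‖(G - G') x₂ + (g - g')‖ ≤ ‖(G - G') x₂‖ + ‖g - g'‖ := norm_add_le _ _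
      _ ≤ ‖G - G'‖ * ‖x₂‖ + ‖g - g'‖ := by
          gcongr
          exact (G - G').le_opNorm x₂
  have hco := hG_coercive d
  have hfinal : lam * ‖d‖ ^ 2 ≤ (‖G - G'‖ * ‖x₂‖ + ‖g - g'‖) * ‖d‖ := by
    calc lam * ‖d‖ ^ 2 ≤ ⟪G d, d⟫ := hco
      _ ≤ ‖(G - G') x₂ + (g - g')‖ * ‖d‖ := hcomb
      _ ≤ (‖G - G'‖ * ‖x₂‖ + ‖g - g'‖) * ‖d‖ := by
          gcongr
  rcases eq_or_lt_of_le (norm_nonneg d) with h0 | h0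
  · rw [← h0]
    positivity
  · rw [div_mul_eq_mul_div, one_mul, le_div_iff₀ hlam]
    nlinarith
end

section
/- Let τ > 0, γ ∈ [0,1), and suppose y : ℝ₊ → ℝ is differentiable and satisfies ẏ_t = −τ y_t − (1−γ) v_t for all t > 0, where v : ℝ₊ → ℝ is continuous, nonnegative, and nonincreasing, and y_t ≥ 0 for all t ≥ 0. Then for all t > 0, v_t ≤ τ y_0 / ((1−γ)(e^{τt} − 1)). -/
open Real Set

/-!
Multiplying the equation `ẏ = -τ y - (1-γ) v` by the integrating factor `e^{τ r}` gives
`d/dr (e^{τ r} y_r) = -(1-γ) e^{τ r} v_r`. On `[0, t]` we have `v_r ≥ v_t`, so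
`F r = e^{τ r} y_r + (1-γ) v_t (e^{τ r} - 1) / τ` is nonincreasing there. Hence
`F t ≤ F 0 = y_0`, and dropping `e^{τ t} y_t ≥ 0` leaves `(1-γ) v_t (e^{τ t} - 1) / τ ≤ y_0`.
-/

section IntegratingFactor

variable {τ c w : ℝ} {y v : ℝ → ℝ}

theorem hasDerivAt_exp_mul_mul_add (hτ : τ ≠ 0) {r : ℝ}
    (hy : HasDerivAt y (-τ * y r - c * v r) r) :
    HasDerivAt (fun s ↦ exp (τ * s) * y s + c * w * ((exp (τ * s) - 1) / τ))
      (c * exp (τ * r) * (w - v r)) r := by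
  have hexp : HasDerivAt (fun s ↦ exp (τ * s)) (exp (τ * r) * τ) r := by
    simpa using ((hasDerivAt_id r).const_mul τ).exp
  refine ((hexp.mul hy).add (((hexp.sub_const 1).div_const τ).const_mul (c * w))).congr_deriv ?_
  rw [mul_div_cancel_right₀ _ hτ]
  ring

theorem antitoneOn_exp_mul_mul_add (hτ : τ ≠ 0) (hc : 0 ≤ c) {a b : ℝ}
    (hy_cont : ContinuousOn y (Icc a b))
    (hy : ∀ r ∈ Ioo a b, HasDerivAt y (-τ * y r - c * v r) r)
    (hw : ∀ r ∈ Ioo a b, w ≤ v r) :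
    AntitoneOn (fun s ↦ exp (τ * s) * y s + c * w * ((exp (τ * s) - 1) / τ)) (Icc a b) := by
  refine antitoneOn_of_hasDerivWithinAt_nonpos (convex_Icc a b) ?_ ?_ ?_
    (f' := fun r ↦ c * exp (τ * r) * (w - v r))
  · fun_prop (disch := assumption)
  · intro r hr
    rw [interior_Icc] at hr ⊢
    exact (hasDerivAt_exp_mul_mul_add hτ (hy r hr)).hasDerivWithinAt
  · intro r hr
    rw [interior_Icc] at hr
    exact mul_nonpos_of_nonneg_of_nonpos (by positivity) (sub_nonpos.2 (hw r hr))

end IntegratingFactor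

theorem ode_comparison_exponential_convergence_general
    (τ γ : ℝ) (hτ : 0 < τ) (hγ1 : γ < 1)
    (y v : ℝ → ℝ)
    (hy_nonneg : ∀ t ≥ (0 : ℝ), 0 ≤ y t)
    (hy_cont : ContinuousOn y (Ici 0))
    (hv_mono : ∀ s t : ℝ, 0 ≤ s → s ≤ t → v t ≤ v s)
    (hy_deriv : ∀ t > (0 : ℝ), HasDerivAt y (-τ * y t - (1 - γ) * v t) t) :
    ∀ t > (0 : ℝ), v t ≤ τ * y 0 / ((1 - γ) * (Real.exp (τ * t) - 1)) := by
  intro t ht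
  have hγ : 0 < 1 - γ := by linarith
  have hF : exp (τ * t) * y t + (1 - γ) * v t * ((exp (τ * t) - 1) / τ) ≤ y 0 := by
    simpa using antitoneOn_exp_mul_mul_add hτ.ne' hγ.le (hy_cont.mono Icc_subset_Ici_self)
      (fun r hr ↦ hy_deriv r hr.1) (fun r hr ↦ hv_mono r t hr.1.le hr.2.le)
      (left_mem_Icc.2 ht.le) (right_mem_Icc.2 ht.le) ht.le
  have hexp : 0 < exp (τ * t) - 1 := sub_pos.2 (one_lt_exp_iff.2 (by positivity))
  have hyt : 0 ≤ exp (τ * t) * y t := mul_nonneg (exp_pos _).le (hy_nonneg t ht.le)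
  rw [le_div_iff₀ (by positivity)]
  calc v t * ((1 - γ) * (exp (τ * t) - 1))
      = τ * ((1 - γ) * v t * ((exp (τ * t) - 1) / τ)) := by field_simp
    _ ≤ τ * y 0 := by gcongr; linarith

/-- ODE comparison for exponential convergence: if `y ≥ 0` on `[0,∞)` is
continuous there, differentiable on `(0,∞)` with `ẏ_t = −τ y_t − (1−γ) v_t`, where `v` is
continuous on `[0,∞)`, nonnegative and nonincreasing, then
`v_t ≤ τ y_0 / ((1−γ)(e^{τt} − 1))` for all `t > 0`. -/
theorem ode_comparison_exponential_convergence
    (τ γ : ℝ) (hτ : 0 < τ) (hγ0 : 0 ≤ γ) (hγ1 : γ < 1)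
    (y v : ℝ → ℝ)
    (hy_nonneg : ∀ t ≥ (0 : ℝ), 0 ≤ y t)
    (hy_cont : ContinuousOn y (Ici 0))
    (hv_cont : ContinuousOn v (Ici 0))
    (hv_nonneg : ∀ t ≥ (0 : ℝ), 0 ≤ v t)
    (hv_mono : ∀ s t : ℝ, 0 ≤ s → s ≤ t → v t ≤ v s)
    (hy_deriv : ∀ t > (0 : ℝ), HasDerivAt y (-τ * y t - (1 - γ) * v t) t) :
    ∀ t > (0 : ℝ), v t ≤ τ * y 0 / ((1 - γ) * (Real.exp (τ * t) - 1)) :=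
  ode_comparison_exponential_convergence_general τ γ hτ hγ1 y v hy_nonneg hy_cont hv_mono hy_deriv
end

section
/- Let A be a Polish space, μ ∈ P(A), and let f, g and sequences t_n ∈ (0,1), g_n be bounded measurable functions with t_n → 0 and ‖g_n − g‖_∞ → 0. Define Φ(h) = ln ∫_A e^{h(a)} μ(da). Then (Φ(f + t_n g_n) − Φ(f))/t_n → ∫_A g(a) π_f(da), where π_f(da) = e^{f(a)}μ(da)/∫_A e^{f}dμ. Moreover |∫_A g dπ_f| ≤ ‖g‖_∞. -/
open MeasureTheory Real Filter Topology
open scoped ENNReal NNReal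

private lemma aux_log_est {u : ℝ} (h : |u| ≤ 1/2) : |Real.log (1+u) - u| ≤ 2 * u^2 := by
  obtain ⟨h1, h2⟩ := abs_le.mp h
  have hpos : (0:ℝ) < 1 + u := by linarith
  have hup : Real.log (1+u) ≤ u := by
    have := Real.log_le_sub_one_of_pos hpos; linarith
  have hlow : 1 - (1+u)⁻¹ ≤ Real.log (1+u) := by
    have h3 := Real.log_le_sub_one_of_pos (inv_pos.mpr hpos)
    rw [Real.log_inv] at h3; linarith
  have hinv : (1+u)⁻¹ * (1+u) = 1 := inv_mul_cancel₀ (ne_of_gt hpos)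
  rw [abs_le]
  constructor
  · have hkey : (1+u)⁻¹ ≤ 1 - u + 2*u^2 := by
      rw [inv_le_iff_one_le_mul₀' hpos]  -- maybe wrong name; fallback below
      nlinarith
    nlinarith
  · nlinarith [sq_nonneg u]

/-- Hadamard differentiability of the log-partition functional: with
`Φ(h) = ln ∫ e^h dμ`, if `t_n ∈ (0,1)`, `t_n → 0`, and bounded measurable `g_n → g`
uniformly, then `(Φ(f + t_n g_n) − Φ(f))/t_n → ∫ g dπ_f`, where `π_f` is the Gibbs
measure of `f`; moreover `|∫ g dπ_f| ≤ ‖g‖_∞`. -/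
theorem logPartition_hadamard_deriv
    {A : Type*} [MeasurableSpace A] [TopologicalSpace A] [PolishSpace A] [BorelSpace A]
    (μ : Measure A) [IsProbabilityMeasure μ]
    (f g : A → ℝ) (hf : Measurable f) (hgm : Measurable g)
    (Cf : ℝ) (hfb : ∀ a, |f a| ≤ Cf) (Cg : ℝ) (hgb : ∀ a, |g a| ≤ Cg)
    (t : ℕ → ℝ) (ht : ∀ n, t n ∈ Set.Ioo (0 : ℝ) 1) (ht0 : Tendsto t atTop (𝓝 0))
    (gn : ℕ → A → ℝ) (hgn_meas : ∀ n, Measurable (gn n))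
    (Cgn : ℝ) (hgn_bdd : ∀ n a, |gn n a| ≤ Cgn)
    (hgn_unif : Tendsto (fun n => ⨆ a, |gn n a - g a|) atTop (𝓝 0))
    (pif : Measure A)
    (hpif : pif = μ.withDensity fun a =>
      ENNReal.ofReal (Real.exp (f a) / ∫ a', Real.exp (f a') ∂μ)) :
    Tendsto (fun n =>
        (Real.log (∫ a, Real.exp (f a + t n * gn n a) ∂μ)
          - Real.log (∫ a, Real.exp (f a) ∂μ)) / t n)
      atTop (𝓝 (∫ a, g a ∂pif)) ∧
    |∫ a, g a ∂pif| ≤ ⨆ a, |g a| := by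
  have hAne : Nonempty A := by
    by_contra h
    rw [not_nonempty_iff] at h
    have h1 : μ Set.univ = 1 := measure_univ
    rw [Set.univ_eq_empty_iff.mpr h, measure_empty] at h1
    exact zero_ne_one h1
  obtain ⟨a0⟩ := hAne
  have hCgn0 : 0 ≤ Cgn := (abs_nonneg _).trans (hgn_bdd 0 a0)
  -- integrability helper
  have key : ∀ (h : A → ℝ) (C : ℝ), Measurable h → (∀ a, |h a| ≤ C) →
      Integrable h μ := fun h C hm hb =>
    (integrable_const C).mono' hm.aestronglyMeasurable
      (Filter.Eventually.of_forall fun a => by simpa [Real.norm_eq_abs] using hb a)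
  have i_ef : Integrable (fun a => Real.exp (f a)) μ :=
    key _ (Real.exp Cf) hf.exp fun a => by
      rw [abs_of_nonneg (Real.exp_nonneg _)]
      exact Real.exp_le_exp.mpr ((le_abs_self _).trans (hfb a))
  have habs_tg : ∀ n a, |t n * gn n a| ≤ t n * Cgn := fun n a => by
    rw [abs_mul, abs_of_pos (ht n).1]
    exact mul_le_mul_of_nonneg_left (hgn_bdd n a) (ht n).1.le
  have i_egn : ∀ n, Integrable (fun a => Real.exp (f a + t n * gn n a)) μ := fun n =>
    key _ (Real.exp (Cf + Cgn)) (hf.add (measurable_const.mul (hgn_meas n))).exp fun a => by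
      rw [abs_of_nonneg (Real.exp_nonneg _)]
      apply Real.exp_le_exp.mpr
      have h1 := habs_tg n a
      have h2 : t n * Cgn ≤ Cgn :=
        mul_le_of_le_one_left hCgn0 (ht n).2.le
      have h3 := (abs_le.mp (hfb a)).2
      have h4 := (abs_le.mp h1).2
      linarith
  have i_gef : ∀ n, Integrable (fun a => gn n a * Real.exp (f a)) μ := fun n =>
    key _ (Cgn * Real.exp Cf) ((hgn_meas n).mul hf.exp) fun a => by
      rw [abs_mul, abs_of_nonneg (Real.exp_nonneg _)]
      exact mul_le_mul (hgn_bdd n a) (Real.exp_le_exp.mpr ((le_abs_self _).trans (hfb a)))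
        (Real.exp_nonneg _) hCgn0
  have hCg0 : 0 ≤ Cg := (abs_nonneg _).trans (hgb a0)
  have i_ggef : Integrable (fun a => g a * Real.exp (f a)) μ :=
    key _ (Cg * Real.exp Cf) (hgm.mul hf.exp) fun a => by
      rw [abs_mul, abs_of_nonneg (Real.exp_nonneg _)]
      exact mul_le_mul (hgb a) (Real.exp_le_exp.mpr ((le_abs_self _).trans (hfb a)))
        (Real.exp_nonneg _) hCg0
  set Z : ℝ := ∫ a, Real.exp (f a) ∂μ with hZdef
  set S : ℕ → ℝ := fun n => ∫ a, Real.exp (f a + t n * gn n a) ∂μ with hSdef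
  set I : ℕ → ℝ := fun n => ∫ a, gn n a * Real.exp (f a) ∂μ with hIdef
  set J : ℝ := ∫ a, g a * Real.exp (f a) ∂μ with hJdef
  have hint_const : ∀ c : ℝ, (∫ _ : A, c ∂μ) = c := fun c => by
    simp [measure_univ]
  have hZpos : 0 < Z := by
    have h1 : Real.exp (-Cf) ≤ Z := by
      have := integral_mono (integrable_const (Real.exp (-Cf))) i_ef
        (fun a => Real.exp_le_exp.mpr (by have := (abs_le.mp (hfb a)).1; linarith))
      rwa [hint_const] at this
    exact lt_of_lt_of_le (Real.exp_pos _) h1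
  have hSpos : ∀ n, 0 < S n := fun n => by
    have h1 : Real.exp (-(Cf + Cgn)) ≤ S n := by
      have := integral_mono (integrable_const (Real.exp (-(Cf + Cgn)))) (i_egn n)
        (fun a => Real.exp_le_exp.mpr (by
          have h3 := (abs_le.mp (hfb a)).1
          have h4 := (abs_le.mp (habs_tg n a)).1
          have h2 : t n * Cgn ≤ Cgn := mul_le_of_le_one_left hCgn0 (ht n).2.le
          linarith))
      rwa [hint_const] at this
    exact lt_of_lt_of_le (Real.exp_pos _) h1
  -- value of the Gibbs integral
  have hpi : (∫ a, g a ∂pif) = J / Z := by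
    rw [hpif]
    have hmeas : Measurable (fun a => Real.toNNReal (Real.exp (f a) / Z)) :=
      (hf.exp.div_const Z).real_toNNReal
    rw [show (fun a => ENNReal.ofReal (Real.exp (f a) / Z))
        = (fun a => ((fun a => Real.toNNReal (Real.exp (f a) / Z)) a : ℝ≥0∞)) from rfl]
    rw [integral_withDensity_eq_integral_smul hmeas]
    have : ∀ a, Real.toNNReal (Real.exp (f a) / Z) • g a = g a * Real.exp (f a) / Z := by
      intro a
      rw [NNReal.smul_def, Real.coe_toNNReal _ (div_nonneg (Real.exp_nonneg _) hZpos.le),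
        smul_eq_mul]
      ring
    rw [show (fun a => Real.toNNReal (Real.exp (f a) / Z) • g a)
        = fun a => g a * Real.exp (f a) / Z from funext this, integral_div]
  -- sup bound for g
  have hbddg : BddAbove (Set.range fun a => |g a|) := ⟨Cg, by rintro x ⟨a, rfl⟩; exact hgb a⟩
  have hM : ∀ a, |g a| ≤ ⨆ a, |g a| := fun a => le_ciSup hbddg a
  have hJle : |J| ≤ (⨆ a, |g a|) * Z := by
    calc |J| ≤ ∫ a, |g a * Real.exp (f a)| ∂μ := by
          have := norm_integral_le_integral_norm (fun a => g a * Real.exp (f a)) (μ := μ)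
          simp only [Real.norm_eq_abs] at this
          exact this
      _ ≤ ∫ a, (⨆ a, |g a|) * Real.exp (f a) ∂μ := by
          apply integral_mono i_ggef.abs (i_ef.const_mul _)
          intro a
          simp only [abs_mul, Real.abs_exp]
          exact mul_le_mul_of_nonneg_right (hM a) (Real.exp_nonneg _)
      _ = (⨆ a, |g a|) * Z := integral_const_mul _ _
  have part2 : |∫ a, g a ∂pif| ≤ ⨆ a, |g a| := by
    rw [hpi, abs_div, abs_of_pos hZpos, div_le_iff₀ hZpos]
    exact hJle
  refine ⟨?_, part2⟩
  rw [hpi]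
  -- I n → J
  have hbddgn : ∀ n, BddAbove (Set.range fun a => |gn n a - g a|) := fun n =>
    ⟨Cgn + Cg, by
      rintro x ⟨a, rfl⟩
      exact (abs_sub _ _).trans (add_le_add (hgn_bdd n a) (hgb a))⟩
  have hdn : ∀ n a, |gn n a - g a| ≤ ⨆ a, |gn n a - g a| := fun n a =>
    le_ciSup (hbddgn n) a
  have hIJ0 : Tendsto (fun n => I n - J) atTop (𝓝 0) := by
    apply squeeze_zero_norm (a := fun n => (⨆ a, |gn n a - g a|) * Real.exp Cf)
    · intro n
      have isub : Integrable (fun a => (gn n a - g a) * Real.exp (f a)) μ :=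
        key _ ((Cgn + Cg) * Real.exp Cf) (((hgn_meas n).sub hgm).mul hf.exp) fun a => by
          rw [abs_mul, Real.abs_exp]
          exact mul_le_mul ((abs_sub _ _).trans (add_le_add (hgn_bdd n a) (hgb a)))
            (Real.exp_le_exp.mpr ((le_abs_self _).trans (hfb a))) (Real.exp_nonneg _)
            (by linarith)
      have heq : I n - J = ∫ a, (gn n a - g a) * Real.exp (f a) ∂μ := by
        rw [← integral_sub (i_gef n) i_ggef]
        congr 1; funext a; ring
      rw [heq, Real.norm_eq_abs]
      calc |∫ a, (gn n a - g a) * Real.exp (f a) ∂μ|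
          ≤ ∫ a, |(gn n a - g a) * Real.exp (f a)| ∂μ := by
            have := norm_integral_le_integral_norm
              (fun a => (gn n a - g a) * Real.exp (f a)) (μ := μ)
            simp only [Real.norm_eq_abs] at this
            exact this
        _ ≤ ∫ _a, (⨆ a, |gn n a - g a|) * Real.exp Cf ∂μ := by
            apply integral_mono isub.abs (integrable_const _)
            intro a
            simp only [abs_mul, Real.abs_exp]
            exact mul_le_mul (hdn n a)
              (Real.exp_le_exp.mpr ((le_abs_self _).trans (hfb a)))
              (Real.exp_nonneg _) ((abs_nonneg _).trans (hdn n a))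
        _ = (⨆ a, |gn n a - g a|) * Real.exp Cf := hint_const _
    · simpa using hgn_unif.mul_const (Real.exp Cf)
  have hIJ : Tendsto I atTop (𝓝 J) := by
    have := hIJ0.add (tendsto_const_nhds (x := J))
    simpa using this
  -- error term E
  set E : ℕ → ℝ := fun n => ∫ a, (Real.exp (f a + t n * gn n a) - Real.exp (f a)
      - t n * (gn n a * Real.exp (f a))) ∂μ with hEdef
  have i_int : ∀ n, Integrable (fun a => Real.exp (f a + t n * gn n a) - Real.exp (f a)
      - t n * (gn n a * Real.exp (f a))) μ := fun n =>
    key _ (Real.exp (Cf + Cgn) + Real.exp Cf + Cgn * Real.exp Cf)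
      (((hf.add (measurable_const.mul (hgn_meas n))).exp.sub hf.exp).sub
        (measurable_const.mul ((hgn_meas n).mul hf.exp))) fun a => by
      have h1 : |Real.exp (f a + t n * gn n a)| ≤ Real.exp (Cf + Cgn) := by
        rw [Real.abs_exp]
        apply Real.exp_le_exp.mpr
        have h4 := (abs_le.mp (habs_tg n a)).2
        have h2 : t n * Cgn ≤ Cgn := mul_le_of_le_one_left hCgn0 (ht n).2.le
        have h3 := (abs_le.mp (hfb a)).2
        linarith
      have h2 : |Real.exp (f a)| ≤ Real.exp Cf := by
        rw [Real.abs_exp]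
        exact Real.exp_le_exp.mpr ((le_abs_self _).trans (hfb a))
      have h3 : |t n * (gn n a * Real.exp (f a))| ≤ Cgn * Real.exp Cf := by
        rw [abs_mul, abs_mul, abs_of_pos (ht n).1, Real.abs_exp]
        calc t n * (|gn n a| * Real.exp (f a))
            ≤ 1 * (Cgn * Real.exp Cf) :=
              mul_le_mul (ht n).2.le
                (mul_le_mul (hgn_bdd n a)
                  (Real.exp_le_exp.mpr ((le_abs_self _).trans (hfb a)))
                  (Real.exp_nonneg _) hCgn0)
                (by positivity) one_pos.le
          _ = Cgn * Real.exp Cf := one_mul _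
      obtain ⟨h1a, h1b⟩ := abs_le.mp h1
      obtain ⟨h2a, h2b⟩ := abs_le.mp h2
      obtain ⟨h3a, h3b⟩ := abs_le.mp h3
      rw [abs_le]
      constructor <;> linarith
  have hSE : ∀ n, S n = Z + t n * I n + E n := by
    intro n
    have i1 : Integrable (fun a => Real.exp (f a + t n * gn n a) - Real.exp (f a)) μ :=
      (i_egn n).sub i_ef
    have i2 : Integrable (fun a => t n * (gn n a * Real.exp (f a))) μ :=
      (i_gef n).const_mul (t n)
    have : E n = S n - Z - t n * I n := by
      rw [hEdef]
      simp only
      rw [integral_sub i1 i2, integral_sub (i_egn n) i_ef, integral_const_mul]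
    linarith
  have htsmall : ∀ᶠ n in atTop, t n * Cgn ≤ 1 := by
    have h1 : Tendsto (fun n => t n * Cgn) atTop (𝓝 0) := by
      simpa using ht0.mul_const Cgn
    exact h1.eventually_le_const one_pos
  have hEb : ∀ᶠ n in atTop, |E n| ≤ Real.exp Cf * Cgn^2 * t n^2 := by
    filter_upwards [htsmall] with n hn
    have hbd : ∀ a, |Real.exp (f a + t n * gn n a) - Real.exp (f a)
        - t n * (gn n a * Real.exp (f a))| ≤ Real.exp Cf * Cgn^2 * t n^2 := by
      intro a
      set x := t n * gn n a with hx
      have hx1 : |x| ≤ 1 := (habs_tg n a).trans hn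
      have heq : Real.exp (f a + x) - Real.exp (f a) - t n * (gn n a * Real.exp (f a))
          = Real.exp (f a) * (Real.exp x - 1 - x) := by
        rw [Real.exp_add, hx]; ring
      rw [heq, abs_mul, abs_of_nonneg (Real.exp_nonneg _)]
      have h2 : |Real.exp x - 1 - x| ≤ x^2 := Real.abs_exp_sub_one_sub_id_le hx1
      have h3 : x^2 ≤ Cgn^2 * t n^2 := by
        have : x^2 = |x|^2 := (sq_abs x).symm
        rw [this]
        calc |x|^2 ≤ (t n * Cgn)^2 := by
              apply pow_le_pow_left₀ (abs_nonneg _) (habs_tg n a)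
          _ = Cgn^2 * t n^2 := by ring
      calc Real.exp (f a) * |Real.exp x - 1 - x|
          ≤ Real.exp Cf * (Cgn^2 * t n^2) := by
            apply mul_le_mul (Real.exp_le_exp.mpr ((le_abs_self _).trans (hfb a)))
              (h2.trans h3) (abs_nonneg _) (Real.exp_nonneg _)
        _ = Real.exp Cf * Cgn^2 * t n^2 := by ring
    calc |E n| ≤ ∫ a, |Real.exp (f a + t n * gn n a) - Real.exp (f a)
          - t n * (gn n a * Real.exp (f a))| ∂μ := by
          have := norm_integral_le_integral_norm
            (fun a => Real.exp (f a + t n * gn n a) - Real.exp (f a)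
              - t n * (gn n a * Real.exp (f a))) (μ := μ)
          simp only [Real.norm_eq_abs] at this
          exact this
      _ ≤ ∫ _a, Real.exp Cf * Cgn^2 * t n^2 ∂μ := by
          apply integral_mono (i_int n).abs (integrable_const _) (fun a => hbd a)
      _ = Real.exp Cf * Cgn^2 * t n^2 := hint_const _
  -- v n
  set v : ℕ → ℝ := fun n => I n / Z + E n / (t n * Z) with hvdef
  have hEt0 : Tendsto (fun n => E n / (t n * Z)) atTop (𝓝 0) := by
    apply squeeze_zero_norm' (a := fun n => Real.exp Cf * Cgn^2 / Z * t n)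
    · filter_upwards [hEb] with n hn
      have htpos := (ht n).1
      rw [Real.norm_eq_abs, abs_div, abs_of_pos (mul_pos htpos hZpos),
        div_le_iff₀ (mul_pos htpos hZpos)]
      have heq : Real.exp Cf * Cgn^2 / Z * t n * (t n * Z)
          = Real.exp Cf * Cgn^2 * t n^2 := by
        field_simp
      rw [heq]
      exact hn
    · simpa using ht0.const_mul (Real.exp Cf * Cgn^2 / Z)
  have hv : Tendsto v atTop (𝓝 (J / Z)) := by
    have := (hIJ.div_const Z).add hEt0
    simpa using this
  have huv : ∀ n, S n / Z = 1 + t n * v n := by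
    intro n
    have htn : t n ≠ 0 := (ht n).1.ne'
    have hZn : Z ≠ 0 := hZpos.ne'
    rw [hSE n, hvdef]
    field_simp
    ring
  have hu0 : Tendsto (fun n => t n * v n) atTop (𝓝 0) := by
    simpa using ht0.mul hv
  -- main convergence
  have hDv : ∀ n, (Real.log (S n) - Real.log Z) / t n - v n
      = (Real.log (1 + t n * v n) - t n * v n) / t n := by
    intro n
    have htn : t n ≠ 0 := (ht n).1.ne'
    rw [← Real.log_div (hSpos n).ne' hZpos.ne', huv n]
    field_simp
  have hfinal : Tendsto (fun n => (Real.log (S n) - Real.log Z) / t n - v n)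
      atTop (𝓝 0) := by
    apply squeeze_zero_norm' (a := fun n => 2 * (t n * v n ^ 2))
    · have hsmall : ∀ᶠ n in atTop, |t n * v n| ≤ 1/2 := by
        have := hu0.abs
        simp only [abs_zero] at this
        exact this.eventually_le_const (by norm_num)
      filter_upwards [hsmall] with n hn
      rw [hDv n, Real.norm_eq_abs, abs_div, abs_of_pos (ht n).1,
        div_le_iff₀ (ht n).1]
      have h1 := aux_log_est hn
      have h2 : 2 * (t n * v n ^ 2) * t n = 2 * (t n * v n)^2 := by ring
      rw [h2]
      exact h1
    · have : Tendsto (fun n => t n * v n ^ 2) atTop (𝓝 (0 * (J/Z)^2)) :=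
        ht0.mul (hv.pow 2)
      simpa using this.const_mul 2
  have := hfinal.add hv
  simpa using this
end
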